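/- Let R be a commutative ring, f ∈ R, and D₁,…,D_l ∈ Der(R) derivations of R (l ≥ 0). For every integer m ≥ l, the sum Σ_{k=0}^{m} C(m,k) (−f)^{m−k} · D₁D₂⋯D_l(f^k) equals 0 if m > l, and equals l! · ∏_{k=1}^{l} D_k f if m = l. -/

import Mathlib

private lemma comp_list_apply {R : Type*} (xs : List (R → R)) (g : R → R) (x : R) :
    (xs.concat g).foldr (· ∘ ·) id x = xs.foldr (· ∘ ·) id (g x) := by
  induction xs with
  | nil => simp
  | cons h t ih => simp only [List.concat_cons, List.foldr_cons, Function.comp_apply, ih]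

private lemma fold_add {R : Type*} [CommRing R] {l : ℕ} (D : Fin l → Derivation ℤ R R)
    (a b : R) :
    (List.ofFn fun i : Fin l => ⇑(D i)).foldr (· ∘ ·) id (a + b) =
      (List.ofFn fun i : Fin l => ⇑(D i)).foldr (· ∘ ·) id a +
      (List.ofFn fun i : Fin l => ⇑(D i)).foldr (· ∘ ·) id b := by
  induction l with
  | zero => simp
  | succ n ih =>
    simp only [List.ofFn_succ, List.foldr_cons, Function.comp_apply]
    rw [ih (fun i => D i.succ), map_add]

private lemma fold_zero {R : Type*} [CommRing R] {l : ℕ} (D : Fin l → Derivation ℤ R R) :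
    (List.ofFn fun i : Fin l => ⇑(D i)).foldr (· ∘ ·) id (0 : R) = 0 := by
  induction l with
  | zero => simp
  | succ n ih =>
    simp only [List.ofFn_succ, List.foldr_cons, Function.comp_apply]
    rw [ih (fun i => D i.succ), map_zero]

private lemma fold_nsmul {R : Type*} [CommRing R] {l : ℕ} (D : Fin l → Derivation ℤ R R)
    (n : ℕ) (a : R) :
    (List.ofFn fun i : Fin l => ⇑(D i)).foldr (· ∘ ·) id (n • a) =
      n • (List.ofFn fun i : Fin l => ⇑(D i)).foldr (· ∘ ·) id a := by
  induction n with
  | zero => simp [fold_zero]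
  | succ n ih => rw [succ_nsmul, fold_add, ih, succ_nsmul]

private lemma aux {R : Type*} [CommRing R] (f : R) :
    ∀ (l : ℕ) (D : Fin l → Derivation ℤ R R) (m : ℕ), l ≤ m → ∀ x : R,
    ∑ j ∈ Finset.range (m + 1), (m.choose j : R) * (-f) ^ (m - j) *
        (List.ofFn fun i : Fin l => ⇑(D i)).foldr (· ∘ ·) id (f ^ j * x) =
      if m = l then (l.factorial : R) * x * ∏ i : Fin l, D i f else 0 := by
  intro l
  induction l with
  | zero =>
    intro D m _ x
    simp only [List.ofFn_zero, List.foldr_nil, id_eq]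
    have h1 : ∑ j ∈ Finset.range (m + 1), (m.choose j : R) * (-f) ^ (m - j) * (f ^ j * x)
        = ((f + -f) ^ m) * x := by
      rw [add_pow, Finset.sum_mul]
      refine Finset.sum_congr rfl fun j _ => by ring
    rw [h1, add_neg_cancel]
    rcases m with _ | m
    · simp
    · simp [zero_pow (Nat.succ_ne_zero m)]
  | succ l ih =>
    intro D m hm x
    set D' : Fin l → Derivation ℤ R R := fun i => D i.castSucc with hD'
    have hF : ∀ z : R, (List.ofFn fun i : Fin (l+1) => ⇑(D i)).foldr (· ∘ ·) id z =
        (List.ofFn fun i : Fin l => ⇑(D' i)).foldr (· ∘ ·) id (D (Fin.last l) z) := by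
      intro z
      rw [List.ofFn_succ' (fun i : Fin (l+1) => ⇑(D i))]
      exact comp_list_apply _ _ z
    have hleib : ∀ j : ℕ, (D (Fin.last l)) (f ^ j * x) =
        f ^ j * (D (Fin.last l)) x + j • (f ^ (j - 1) * (x * (D (Fin.last l)) f)) := by
      intro j
      rw [Derivation.leibniz, Derivation.leibniz_pow]
      simp only [smul_eq_mul, smul_mul_assoc, nsmul_eq_mul]
      ring
    -- split the sum
    have hsplit : ∑ j ∈ Finset.range (m + 1), (m.choose j : R) * (-f) ^ (m - j) *
        (List.ofFn fun i : Fin (l+1) => ⇑(D i)).foldr (· ∘ ·) id (f ^ j * x) =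
      (∑ j ∈ Finset.range (m + 1), (m.choose j : R) * (-f) ^ (m - j) *
        (List.ofFn fun i : Fin l => ⇑(D' i)).foldr (· ∘ ·) id (f ^ j * (D (Fin.last l)) x)) +
      (∑ j ∈ Finset.range (m + 1), (m.choose j : R) * (-f) ^ (m - j) *
        (j • (List.ofFn fun i : Fin l => ⇑(D' i)).foldr (· ∘ ·) id
          (f ^ (j - 1) * (x * (D (Fin.last l)) f)))) := by
      rw [← Finset.sum_add_distrib]
      refine Finset.sum_congr rfl fun j _ => ?_
      rw [hF, hleib, fold_add, fold_nsmul, mul_add]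
    rw [hsplit]
    have hml : m ≠ l := by omega
    have h2 : (∑ j ∈ Finset.range (m + 1), (m.choose j : R) * (-f) ^ (m - j) *
        (List.ofFn fun i : Fin l => ⇑(D' i)).foldr (· ∘ ·) id (f ^ j * (D (Fin.last l)) x)) = 0 := by
      rw [ih D' m (by omega) ((D (Fin.last l)) x), if_neg hml]
    rw [h2, zero_add]
    -- reindex the second sum
    obtain ⟨t, rfl⟩ : ∃ t, m = t + 1 := ⟨m - 1, by omega⟩
    rw [Finset.sum_range_succ']
    have hzero : ((t+1).choose 0 : R) * (-f) ^ (t + 1 - 0) *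
        ((0 : ℕ) • (List.ofFn fun i : Fin l => ⇑(D' i)).foldr (· ∘ ·) id
          (f ^ (0 - 1) * (x * (D (Fin.last l)) f))) = 0 := by
      simp
    rw [hzero, add_zero]
    have hterm : ∀ j : ℕ, ((t+1).choose (j+1) : R) * (-f) ^ (t + 1 - (j + 1)) *
        ((j + 1) • (List.ofFn fun i : Fin l => ⇑(D' i)).foldr (· ∘ ·) id
          (f ^ (j + 1 - 1) * (x * (D (Fin.last l)) f))) =
        ((t + 1 : ℕ) : R) * ((t.choose j : R) * (-f) ^ (t - j) *
          (List.ofFn fun i : Fin l => ⇑(D' i)).foldr (· ∘ ·) id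
            (f ^ j * ((x * (D (Fin.last l)) f)))) := by
      intro j
      have hc : ((t+1).choose (j+1) * (j+1) : ℕ) = (t + 1) * t.choose j :=
        (Nat.add_one_mul_choose_eq t j).symm
      have hcR : ((t+1).choose (j+1) : R) * ((j+1 : ℕ) : R) = ((t + 1 : ℕ) : R) * (t.choose j : R) := by
        rw [← Nat.cast_mul, ← Nat.cast_mul, hc]
      have he : t + 1 - (j + 1) = t - j := by omega
      rw [nsmul_eq_mul, he]
      calc ((t+1).choose (j+1) : R) * (-f) ^ (t - j) *
            (((j+1 : ℕ) : R) * (List.ofFn fun i : Fin l => ⇑(D' i)).foldr (· ∘ ·) id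
              (f ^ (j + 1 - 1) * (x * (D (Fin.last l)) f)))
          = (((t+1).choose (j+1) : R) * ((j+1 : ℕ) : R)) * ((-f) ^ (t - j) *
              (List.ofFn fun i : Fin l => ⇑(D' i)).foldr (· ∘ ·) id
                (f ^ (j + 1 - 1) * (x * (D (Fin.last l)) f))) := by ring
        _ = _ := by rw [hcR]; simp only [Nat.add_sub_cancel]; ring
    rw [Finset.sum_congr rfl fun j _ => hterm j, ← Finset.mul_sum]
    rw [ih D' t (by omega) (x * (D (Fin.last l)) f)]
    by_cases ht : t = l
    · subst ht
      rw [if_pos rfl, if_pos rfl, Fin.prod_univ_castSucc, Nat.factorial_succ]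
      push_cast
      ring
    · rw [if_neg ht, if_neg (show ¬ t + 1 = l + 1 by omega)]
      rw [mul_zero]

theorem stmt2 {R : Type*} [CommRing R] (f : R) (l : ℕ)
    (D : Fin l → Derivation ℤ R R) (m : ℕ) (hlm : l ≤ m) :
    ∑ j ∈ Finset.range (m + 1), (m.choose j : R) * (-f) ^ (m - j) *
        (List.ofFn fun i : Fin l => ⇑(D i)).foldr (· ∘ ·) id (f ^ j) =
      if m = l then (l.factorial : R) * ∏ i : Fin l, D i f else 0 := by
  have h := aux f l D m hlm 1
  simp only [mul_one] at h
  rw [h]
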